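/- Let $0 < y_0 < y_1$, $\gamma > -1$, $K > 0$, $\rho \le 0$. Suppose $f : (0,y_1) \to \mathbb{R}^+$ is $C^2$ with $K^{-1} \le f(x) \le K$, $|f'(x)| \le K$, $|f''(x)| \le K x^\rho$ for all $x \in (0,y_1)$. Define $g(x) = (y_0-x)^{-\gamma-1}\int_x^{y_0}(y_0-y)^\gamma f(y)\,dy$ for $x < y_0$ and $g(x) = (x-y_0)^{-\gamma-1}\int_{y_0}^x (y-y_0)^\gamma f(y)\,dy$ for $x > y_0$. Then $g$ extends to a $C^2$ function on $(0,y_1)$ and there exists $\widetilde K$ depending only on $K,\rho,y_0,y_1,\gamma$ such that $\widetilde K^{-1} \le g \le \widetilde K$, $|g'| \le \widetilde K$, and $|g''(x)| \le \widetilde K x^\rho$ on $(0,y_1)$. -/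

import Mathlib

open Set MeasureTheory intervalIntegral
open Metric
open scoped Interval

lemma seg_mem {y₀ y₁ x t : ℝ} (hx : x ∈ Ioo 0 y₁) (hy₀ : y₀ ∈ Ioo 0 y₁)
    (ht : t ∈ Icc (0:ℝ) 1) :
    min x y₀ ≤ x + t*(y₀-x) ∧ x + t*(y₀-x) ∈ Ioo 0 y₁ := by
  obtain ⟨ht0, ht1⟩ := ht
  obtain ⟨hx0, hx1⟩ := hx
  obtain ⟨hy0, hy1⟩ := hy₀
  rcases le_total x y₀ with h | h
  · rw [min_eq_left h]
    refine ⟨by nlinarith, by nlinarith, by nlinarith⟩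
  · rw [min_eq_right h]
    refine ⟨by nlinarith, by nlinarith, by nlinarith⟩

lemma aux_ae_restrict : ∀ᵐ t ∂((volume : Measure ℝ).restrict (Ι (0:ℝ) 1)), t ∈ Ioo (0:ℝ) 1 := by
  have h1 : ∀ᵐ t : ℝ ∂(volume : Measure ℝ), t ≠ 1 := by
    rw [ae_iff]
    have : {a : ℝ | ¬ a ≠ 1} = {1} := by ext a; simp
    rw [this]
    exact measure_singleton 1
  filter_upwards [ae_restrict_mem measurableSet_uIoc, ae_restrict_of_ae h1] with t htm htne
  rw [uIoc_of_le (zero_le_one : (0:ℝ) ≤ 1)] at htm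
  exact ⟨htm.1, lt_of_le_of_ne htm.2 htne⟩

lemma aux_ae_vol : ∀ᵐ t : ℝ ∂(volume : Measure ℝ), t ∈ Ι (0:ℝ) 1 → t ∈ Ioo (0:ℝ) 1 := by
  have h1 : ∀ᵐ t : ℝ ∂(volume : Measure ℝ), t ≠ 1 := by
    rw [ae_iff]
    have : {a : ℝ | ¬ a ≠ 1} = {1} := by ext a; simp
    rw [this]
    exact measure_singleton 1
  filter_upwards [h1] with t htne htm
  rw [uIoc_of_le (zero_le_one : (0:ℝ) ≤ 1)] at htm
  exact ⟨htm.1, lt_of_le_of_ne htm.2 htne⟩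

lemma aux_base_int (γ : ℝ) (hγ : -1 < γ) :
    IntervalIntegrable (fun t : ℝ => (1-t)^γ) volume 0 1 :=
  by simpa using ((intervalIntegral.intervalIntegrable_rpow' (a := 0) (b := 1) hγ).comp_sub_left 1).symm

lemma aux_base_val (γ : ℝ) (hγ : -1 < γ) :
    ∫ t in (0:ℝ)..1, (1-t)^γ = (γ+1)⁻¹ := by
  rw [intervalIntegral.integral_comp_sub_left (fun s : ℝ => s ^ γ) 1]
  norm_num
  rw [integral_rpow (Or.inl hγ)]
  rw [Real.one_rpow, Real.zero_rpow (by linarith : γ + 1 ≠ 0)]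
  rw [sub_zero, one_div]

lemma aux_est (γ β : ℝ) (hβ : γ ≤ β) {t : ℝ} (u c : ℝ) (ht : t ∈ Ioo (0:ℝ) 1) (hu : |u| ≤ c) :
    ‖(1-t)^β * u‖ ≤ (1-t)^γ * c := by
  have h1 : (0:ℝ) < 1 - t := by linarith [ht.2]
  rw [Real.norm_eq_abs, abs_mul, abs_of_nonneg (Real.rpow_nonneg h1.le β)]
  exact mul_le_mul (Real.rpow_le_rpow_of_exponent_ge h1 (by linarith [ht.1]) hβ) hu
    (abs_nonneg _) (Real.rpow_nonneg h1.le γ)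

lemma aux_meas (y₀ y₁ β : ℝ) (hy₀ : 0 < y₀) (hy : y₀ < y₁) (h : ℝ → ℝ)
    (hc : ContinuousOn h (Ioo 0 y₁)) (x : ℝ) (hx : x ∈ Ioo (0:ℝ) y₁) :
    AEStronglyMeasurable (fun t => (1-t)^β * h (x + t*(y₀-x)))
      ((volume : Measure ℝ).restrict (Ι (0:ℝ) 1)) := by
  rw [uIoc_of_le (zero_le_one : (0:ℝ) ≤ 1),
    ← Measure.restrict_congr_set Ioo_ae_eq_Ioc]
  refine (ContinuousOn.mul ?_ ?_).aestronglyMeasurable measurableSet_Ioo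
  · intro t ht
    exact ((continuous_const.sub continuous_id).continuousAt.rpow_const
      (Or.inl (by show (1:ℝ) - t ≠ 0; intro hh; rw [sub_eq_zero] at hh; exact ht.2.ne hh.symm))).continuousWithinAt
  · refine hc.comp ((continuous_const.add (continuous_id.mul continuous_const)).continuousOn) ?_
    intro t ht
    exact (seg_mem hx ⟨hy₀, hy⟩ (Ioo_subset_Icc_self ht)).2

lemma aux_int (y₀ y₁ γ β M : ℝ) (hy₀ : 0 < y₀) (hy : y₀ < y₁) (hγ : -1 < γ) (hβ : γ ≤ β)
    (h : ℝ → ℝ) (hc : ContinuousOn h (Ioo 0 y₁)) (hM : ∀ y ∈ Ioo (0:ℝ) y₁, |h y| ≤ M)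
    (x : ℝ) (hx : x ∈ Ioo (0:ℝ) y₁) :
    IntervalIntegrable (fun t => (1-t)^β * h (x + t*(y₀-x))) volume 0 1 := by
  refine IntervalIntegrable.mono_fun' (g := fun t => (1-t)^γ * M)
    ((aux_base_int γ hγ).mul_const M) (aux_meas y₀ y₁ β hy₀ hy h hc x hx) ?_
  filter_upwards [aux_ae_restrict] with t ht
  exact aux_est γ β hβ _ M ht (hM _ (seg_mem hx ⟨hy₀, hy⟩ (Ioo_subset_Icc_self ht)).2)

lemma aux_ball (y₁ x₀ : ℝ) (hx₀ : x₀ ∈ Ioo (0:ℝ) y₁) :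
    0 < min (x₀/2) ((y₁-x₀)/2) ∧
    ball x₀ (min (x₀/2) ((y₁-x₀)/2)) ⊆ Ioo (0:ℝ) y₁ ∧
    ∀ x ∈ ball x₀ (min (x₀/2) ((y₁-x₀)/2)), x₀/2 ≤ x := by
  obtain ⟨h0, h1⟩ := hx₀
  refine ⟨lt_min (by linarith) (by linarith), ?_, ?_⟩
  · intro x hx
    rw [mem_ball, Real.dist_eq, abs_lt] at hx
    constructor
    · nlinarith [min_le_left (x₀/2) ((y₁-x₀)/2)]
    · nlinarith [min_le_right (x₀/2) ((y₁-x₀)/2)]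
  · intro x hx
    rw [mem_ball, Real.dist_eq, abs_lt] at hx
    nlinarith [min_le_left (x₀/2) ((y₁-x₀)/2)]

lemma aux_deriv (y₀ y₁ γ β M : ℝ) (hy₀ : 0 < y₀) (hy : y₀ < y₁) (hγ : -1 < γ) (hβ : γ ≤ β)
    (h h' : ℝ → ℝ) (B : ℝ → ℝ)
    (hd : ∀ x ∈ Ioo (0:ℝ) y₁, HasDerivAt h (h' x) x)
    (hc' : ContinuousOn h' (Ioo 0 y₁))
    (hM : ∀ x ∈ Ioo (0:ℝ) y₁, |h x| ≤ M)
    (hB : ∀ x ∈ Ioo (0:ℝ) y₁, |h' x| ≤ B x)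
    (hBanti : ∀ x y, x ∈ Ioo (0:ℝ) y₁ → y ∈ Ioo (0:ℝ) y₁ → x ≤ y → B y ≤ B x)
    (x₀ : ℝ) (hx₀ : x₀ ∈ Ioo (0:ℝ) y₁) :
    HasDerivAt (fun x => ∫ t in (0:ℝ)..1, (1-t)^β * h (x + t*(y₀-x)))
      (∫ t in (0:ℝ)..1, (1-t)^(β+1) * h' (x₀ + t*(y₀-x₀))) x₀ := by
  have hc : ContinuousOn h (Ioo 0 y₁) := fun x hx => (hd x hx).continuousAt.continuousWithinAt
  obtain ⟨hεpos, hball, hhalf⟩ := aux_ball y₁ x₀ hx₀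
  set ε := min (x₀/2) ((y₁-x₀)/2) with hε
  have hy₀' : y₀ ∈ Ioo (0:ℝ) y₁ := ⟨hy₀, hy⟩
  set m := min (x₀/2) y₀ with hm
  have hm_mem : m ∈ Ioo (0:ℝ) y₁ := by
    constructor
    · exact lt_min (by linarith [hx₀.1]) hy₀
    · exact lt_of_le_of_lt (min_le_right _ _) hy
  have hmle : ∀ x ∈ ball x₀ ε, ∀ t ∈ Icc (0:ℝ) 1, m ≤ x + t*(y₀-x) := by
    intro x hx t ht
    refine le_trans ?_ (seg_mem (hball hx) hy₀' ht).1
    exact min_le_min (hhalf x hx) le_rfl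
  have key := intervalIntegral.hasDerivAt_integral_of_dominated_loc_of_deriv_le
    (F := fun x t => (1-t)^β * h (x + t*(y₀-x)))
    (F' := fun x t => (1-t)^(β+1) * h' (x + t*(y₀-x)))
    (bound := fun t => (1-t)^γ * B m) (a := 0) (b := 1) (μ := volume) (x₀ := x₀)
    (ball_mem_nhds x₀ hεpos) ?_ ?_ ?_ ?_ ?_ ?_
  · exact key.2
  · filter_upwards [ball_mem_nhds x₀ hεpos] with x hx
    exact aux_meas y₀ y₁ β hy₀ hy h hc x (hball hx)
  · exact aux_int y₀ y₁ γ β M hy₀ hy hγ hβ h hc hM x₀ hx₀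
  · exact aux_meas y₀ y₁ (β+1) hy₀ hy h' hc' x₀ hx₀
  · filter_upwards [aux_ae_vol] with t ht htm x hx
    have ht' := ht htm
    have hz := seg_mem (hball hx) hy₀' (Ioo_subset_Icc_self ht')
    refine aux_est γ (β+1) (by linarith) _ (B m) ht' ?_
    exact le_trans (hB _ hz.2) (hBanti m _ hm_mem hz.2 (hmle x hx t (Ioo_subset_Icc_self ht')))
  · exact (aux_base_int γ hγ).mul_const (B m)
  · filter_upwards [aux_ae_vol] with t ht htm x hx
    have ht' := ht htm
    have hz := seg_mem (hball hx) hy₀' (Ioo_subset_Icc_self ht')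
    have hzx : HasDerivAt (fun x : ℝ => x + t*(y₀-x)) (1-t) x := by
      have := (hasDerivAt_id x).add
        (((hasDerivAt_const x y₀).sub (hasDerivAt_id x)).const_mul t)
      rw [show (1:ℝ) - t = 1 + t * (0 - 1) by ring]
      exact this
    have hcomp := (hd _ hz.2).comp x hzx
    have hfinal := hcomp.const_mul ((1-t)^β)
    have heq : (1-t)^β * (h' (x + t*(y₀-x)) * (1-t)) = (1-t)^(β+1) * h' (x + t*(y₀-x)) := by
      rw [Real.rpow_add_one (by intro hh; rw [sub_eq_zero] at hh; exact ht'.2.ne hh.symm)]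
      ring
    rw [heq] at hfinal
    exact hfinal

lemma aux_cont (y₀ y₁ γ β : ℝ) (hy₀ : 0 < y₀) (hy : y₀ < y₁) (hγ : -1 < γ) (hβ : γ ≤ β)
    (h : ℝ → ℝ) (B : ℝ → ℝ)
    (hc : ContinuousOn h (Ioo 0 y₁))
    (hB : ∀ x ∈ Ioo (0:ℝ) y₁, |h x| ≤ B x)
    (hBanti : ∀ x y, x ∈ Ioo (0:ℝ) y₁ → y ∈ Ioo (0:ℝ) y₁ → x ≤ y → B y ≤ B x) :
    ContinuousOn (fun x => ∫ t in (0:ℝ)..1, (1-t)^β * h (x + t*(y₀-x))) (Ioo (0:ℝ) y₁) := by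
  intro x₀ hx₀
  refine ContinuousAt.continuousWithinAt ?_
  obtain ⟨hεpos, hball, hhalf⟩ := aux_ball y₁ x₀ hx₀
  set ε := min (x₀/2) ((y₁-x₀)/2) with hε
  have hy₀' : y₀ ∈ Ioo (0:ℝ) y₁ := ⟨hy₀, hy⟩
  set m := min (x₀/2) y₀ with hm
  have hm_mem : m ∈ Ioo (0:ℝ) y₁ := by
    constructor
    · exact lt_min (by linarith [hx₀.1]) hy₀
    · exact lt_of_le_of_lt (min_le_right _ _) hy
  have hmle : ∀ x ∈ ball x₀ ε, ∀ t ∈ Icc (0:ℝ) 1, m ≤ x + t*(y₀-x) := by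
    intro x hx t ht
    refine le_trans ?_ (seg_mem (hball hx) hy₀' ht).1
    exact min_le_min (hhalf x hx) le_rfl
  refine intervalIntegral.continuousAt_of_dominated_interval
    (bound := fun t => (1-t)^γ * B m) ?_ ?_ ?_ ?_
  · filter_upwards [IsOpen.mem_nhds Metric.isOpen_ball (mem_ball_self hεpos)] with x hx
    exact aux_meas y₀ y₁ β hy₀ hy h hc x (hball hx)
  · filter_upwards [IsOpen.mem_nhds Metric.isOpen_ball (mem_ball_self hεpos)] with x hx
    filter_upwards [aux_ae_vol] with t ht htm
    have ht' := ht htm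
    have hz := seg_mem (hball hx) hy₀' (Ioo_subset_Icc_self ht')
    refine aux_est γ β hβ _ (B m) ht' ?_
    exact le_trans (hB _ hz.2) (hBanti m _ hm_mem hz.2 (hmle x hx t (Ioo_subset_Icc_self ht')))
  · exact (aux_base_int γ hγ).mul_const (B m)
  · filter_upwards [aux_ae_vol] with t ht htm
    have ht' := ht htm
    have hz := seg_mem hx₀ hy₀' (Ioo_subset_Icc_self ht')
    refine ContinuousAt.mul continuousAt_const ?_
    refine ContinuousAt.comp (hc.continuousAt (Ioo_mem_nhds hz.2.1 hz.2.2)) ?_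
    exact (continuous_id.add (continuous_const.mul (continuous_const.sub continuous_id))).continuousAt

lemma aux_rpow_one (c γ : ℝ) (hc : 0 < c) :
    c ^ (-γ - 1) * c * c ^ γ = 1 := by
  have : c ^ (-γ - 1) * c * c ^ γ = c ^ (-γ - 1) * c ^ (1:ℝ) * c ^ γ := by
    rw [Real.rpow_one]
  rw [this, ← Real.rpow_add hc, ← Real.rpow_add hc]
  norm_num

lemma aux_repr_lt (y₀ γ : ℝ) (f : ℝ → ℝ) (x : ℝ) (hxy : x < y₀) :
    (y₀ - x) ^ (-γ - 1) * ∫ y in x..y₀, (y₀ - y) ^ γ * f y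
      = ∫ t in (0:ℝ)..1, (1-t)^γ * f (x + t*(y₀-x)) := by
  have hcpos : 0 < y₀ - x := by linarith
  have hc : y₀ - x ≠ 0 := ne_of_gt hcpos
  have h1 := intervalIntegral.integral_comp_mul_add (a := 0) (b := 1)
    (fun y => (y₀ - y)^γ * f y) hc x
  have h2 : ∫ y in x..y₀, (y₀ - y)^γ * f y
      = (y₀ - x) * ∫ t in (0:ℝ)..1, (y₀ - ((y₀-x) * t + x))^γ * f ((y₀-x) * t + x) := by
    rw [h1]
    rw [smul_eq_mul, ← mul_assoc, mul_inv_cancel₀ hc, one_mul]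
    norm_num
  rw [h2]
  have h3 : (∫ t in (0:ℝ)..1, (y₀ - ((y₀-x) * t + x))^γ * f ((y₀-x) * t + x))
      = (y₀ - x)^γ * ∫ t in (0:ℝ)..1, (1-t)^γ * f (x + t*(y₀-x)) := by
    rw [← intervalIntegral.integral_const_mul]
    refine intervalIntegral.integral_congr ?_
    intro t ht
    rw [uIcc_of_le (zero_le_one : (0:ℝ) ≤ 1)] at ht
    show (y₀ - ((y₀-x) * t + x))^γ * f ((y₀-x) * t + x)
      = (y₀-x)^γ * ((1-t)^γ * f (x + t*(y₀-x)))
    have e1 : y₀ - ((y₀-x) * t + x) = (y₀ - x) * (1 - t) := by ring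
    have e2 : (y₀-x) * t + x = x + t*(y₀-x) := by ring
    rw [e1, e2, Real.mul_rpow hcpos.le (by linarith [ht.2])]
    ring
  rw [h3]
  have := aux_rpow_one (y₀ - x) γ hcpos
  calc (y₀ - x) ^ (-γ - 1) * ((y₀ - x) * ((y₀ - x) ^ γ * ∫ t in (0:ℝ)..1, (1-t)^γ * f (x + t*(y₀-x))))
      = ((y₀ - x) ^ (-γ - 1) * (y₀ - x) * (y₀ - x) ^ γ) * ∫ t in (0:ℝ)..1, (1-t)^γ * f (x + t*(y₀-x)) := by ring
    _ = _ := by rw [this, one_mul]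

lemma aux_repr_gt (y₀ γ : ℝ) (f : ℝ → ℝ) (x : ℝ) (hxy : y₀ < x) :
    (x - y₀) ^ (-γ - 1) * ∫ y in y₀..x, (y - y₀) ^ γ * f y
      = ∫ t in (0:ℝ)..1, (1-t)^γ * f (x + t*(y₀-x)) := by
  have hcpos : 0 < x - y₀ := by linarith
  have hc : y₀ - x ≠ 0 := by intro hh; apply absurd hh; intro hh'; nlinarith
  have h1 := intervalIntegral.integral_comp_mul_add (a := 0) (b := 1)
    (fun y => (y - y₀)^γ * f y) hc x
  have h2 : ∫ y in y₀..x, (y - y₀)^γ * f y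
      = (x - y₀) * ∫ t in (0:ℝ)..1, (((y₀-x) * t + x) - y₀)^γ * f ((y₀-x) * t + x) := by
    rw [intervalIntegral.integral_symm]
    rw [show ((y₀ - x) * 0 + x) = x by ring, show ((y₀ - x) * 1 + x) = y₀ by ring] at h1
    have h1' : (y₀ - x) * ∫ t in (0:ℝ)..1, (((y₀-x) * t + x) - y₀)^γ * f ((y₀-x) * t + x)
        = ∫ y in x..y₀, (y - y₀)^γ * f y := by
      rw [h1, smul_eq_mul, ← mul_assoc, mul_inv_cancel₀ hc, one_mul]
    rw [← h1']
    ring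
  rw [h2]
  have h3 : (∫ t in (0:ℝ)..1, (((y₀-x) * t + x) - y₀)^γ * f ((y₀-x) * t + x))
      = (x - y₀)^γ * ∫ t in (0:ℝ)..1, (1-t)^γ * f (x + t*(y₀-x)) := by
    rw [← intervalIntegral.integral_const_mul]
    refine intervalIntegral.integral_congr ?_
    intro t ht
    rw [uIcc_of_le (zero_le_one : (0:ℝ) ≤ 1)] at ht
    show (((y₀-x) * t + x) - y₀)^γ * f ((y₀-x) * t + x)
      = (x-y₀)^γ * ((1-t)^γ * f (x + t*(y₀-x)))
    have e1 : ((y₀-x) * t + x) - y₀ = (x - y₀) * (1 - t) := by ring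
    have e2 : (y₀-x) * t + x = x + t*(y₀-x) := by ring
    rw [e1, e2, Real.mul_rpow hcpos.le (by linarith [ht.2])]
    ring
  rw [h3]
  have := aux_rpow_one (x - y₀) γ hcpos
  calc (x - y₀) ^ (-γ - 1) * ((x - y₀) * ((x - y₀) ^ γ * ∫ t in (0:ℝ)..1, (1-t)^γ * f (x + t*(y₀-x))))
      = ((x - y₀) ^ (-γ - 1) * (x - y₀) * (x - y₀) ^ γ) * ∫ t in (0:ℝ)..1, (1-t)^γ * f (x + t*(y₀-x)) := by ring
    _ = _ := by rw [this, one_mul]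

/-- The averaging operator `g^γ_{y₀,y₁}` maps the class `𝒞^ρ_{y₁}(K)` into `𝒞^ρ_{y₁}(K̃)`:
given `f ∈ 𝒞^ρ_{y₁}(K)`, the piecewise-defined average extends to a `C²` function `G` on
`(0,y₁)` with two-sided bounds and derivative bounds with constant depending only on
`K, ρ, y₀, y₁, γ`. -/
theorem stmt_1 (y₀ y₁ γ K ρ : ℝ) (hy₀ : 0 < y₀) (hy : y₀ < y₁) (hγ : -1 < γ)
    (hK : 0 < K) (hρ : ρ ≤ 0) :
    ∃ K' : ℝ, 0 < K' ∧
      ∀ (f f' f'' : ℝ → ℝ),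
        (∀ x ∈ Ioo (0:ℝ) y₁, HasDerivAt f (f' x) x) →
        (∀ x ∈ Ioo (0:ℝ) y₁, HasDerivAt f' (f'' x) x) →
        ContinuousOn f'' (Ioo 0 y₁) →
        (∀ x ∈ Ioo (0:ℝ) y₁, 0 < f x) →
        (∀ x ∈ Ioo (0:ℝ) y₁,
          K⁻¹ ≤ f x ∧ f x ≤ K ∧ |f' x| ≤ K ∧ |f'' x| ≤ K * x ^ ρ) →
        ∃ G G' G'' : ℝ → ℝ,
          (∀ x ∈ Ioo (0:ℝ) y₁, x < y₀ →
            G x = (y₀ - x) ^ (-γ - 1) * ∫ y in x..y₀, (y₀ - y) ^ γ * f y) ∧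
          (∀ x ∈ Ioo (0:ℝ) y₁, y₀ < x →
            G x = (x - y₀) ^ (-γ - 1) * ∫ y in y₀..x, (y - y₀) ^ γ * f y) ∧
          (∀ x ∈ Ioo (0:ℝ) y₁, HasDerivAt G (G' x) x) ∧
          (∀ x ∈ Ioo (0:ℝ) y₁, HasDerivAt G' (G'' x) x) ∧
          ContinuousOn G'' (Ioo 0 y₁) ∧
          (∀ x ∈ Ioo (0:ℝ) y₁,
            K'⁻¹ ≤ G x ∧ G x ≤ K' ∧ |G' x| ≤ K' ∧ |G'' x| ≤ K' * x ^ ρ) := by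
  have hγ1 : (0:ℝ) < γ + 1 := by linarith
  set C : ℝ := max 1 (y₀ ^ ρ * (y₁ ^ ρ)⁻¹) with hC
  have hC1 : (1:ℝ) ≤ C := le_max_left _ _
  have hCpos : 0 < C := lt_of_lt_of_le one_pos hC1
  have hy₁pos : (0:ℝ) < y₁ := lt_trans hy₀ hy
  refine ⟨K * (γ+1) + K * C * (γ+1)⁻¹, by positivity, ?_⟩
  intro f f' f'' hf1 hf2 hf''c hfpos hfb
  set K' : ℝ := K * (γ+1) + K * C * (γ+1)⁻¹ with hK'
  clear_value K'
  have hy₀' : y₀ ∈ Ioo (0:ℝ) y₁ := ⟨hy₀, hy⟩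
  have hfc : ContinuousOn f (Ioo 0 y₁) := fun x hx => (hf1 x hx).continuousAt.continuousWithinAt
  have hf'c : ContinuousOn f' (Ioo 0 y₁) := fun x hx => (hf2 x hx).continuousAt.continuousWithinAt
  have hMf : ∀ y ∈ Ioo (0:ℝ) y₁, |f y| ≤ K := fun y hy' => by
    rw [abs_of_pos (hfpos y hy')]; exact (hfb y hy').2.1
  have hBanti : ∀ a b : ℝ, a ∈ Ioo (0:ℝ) y₁ → b ∈ Ioo (0:ℝ) y₁ → a ≤ b →
      K * b ^ ρ ≤ K * a ^ ρ := fun a b ha hb hab =>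
    mul_le_mul_of_nonneg_left (Real.rpow_le_rpow_of_nonpos ha.1 hab hρ) hK.le
  refine ⟨fun x => ∫ t in (0:ℝ)..1, (1-t)^γ * f (x + t*(y₀-x)),
          fun x => ∫ t in (0:ℝ)..1, (1-t)^(γ+1) * f' (x + t*(y₀-x)),
          fun x => ∫ t in (0:ℝ)..1, (1-t)^(γ+1+1) * f'' (x + t*(y₀-x)),
          ?_, ?_, ?_, ?_, ?_, ?_⟩
  · intro x _ hlt
    exact (aux_repr_lt y₀ γ f x hlt).symm
  · intro x _ hgt
    exact (aux_repr_gt y₀ γ f x hgt).symm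
  · intro x hx
    exact aux_deriv y₀ y₁ γ γ K hy₀ hy hγ le_rfl f f' (fun _ => K) hf1 hf'c hMf
      (fun y hy' => (hfb y hy').2.2.1) (fun _ _ _ _ _ => le_rfl) x hx
  · intro x hx
    exact aux_deriv y₀ y₁ γ (γ+1) K hy₀ hy hγ (by linarith) f' f'' (fun y => K * y ^ ρ)
      hf2 hf''c (fun y hy' => (hfb y hy').2.2.1) (fun y hy' => (hfb y hy').2.2.2) hBanti x hx
  · exact aux_cont y₀ y₁ γ (γ+1+1) hy₀ hy hγ (by linarith) f'' (fun y => K * y ^ ρ)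
      hf''c (fun y hy' => (hfb y hy').2.2.2) hBanti
  · intro x hx
    have hxρpos : 0 < x ^ ρ := Real.rpow_pos_of_pos hx.1 ρ
    have hK'1 : K * (γ+1) ≤ K' := by
      have : 0 < K * C * (γ+1)⁻¹ := by positivity
      linarith [hK']
    have hK'2 : K * (γ+1)⁻¹ * C ≤ K' := by
      have h1 : 0 < K * (γ+1) := by positivity
      have h2 : K * (γ+1)⁻¹ * C = K * C * (γ+1)⁻¹ := by ring
      linarith [hK', h2]
    have hK'3 : K * (γ+1)⁻¹ ≤ K' := by
      have : K * (γ+1)⁻¹ ≤ K * (γ+1)⁻¹ * C :=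
        le_mul_of_one_le_right (by positivity) hC1
      linarith
    have hint_f : IntervalIntegrable (fun t => (1-t)^γ * f (x + t*(y₀-x))) volume 0 1 :=
      aux_int y₀ y₁ γ γ K hy₀ hy hγ le_rfl f hfc hMf x hx
    have hval : ∀ c : ℝ, ∫ t in (0:ℝ)..1, (1-t)^γ * c = (γ+1)⁻¹ * c := by
      intro c
      rw [intervalIntegral.integral_mul_const, aux_base_val γ hγ]
    refine ⟨?_, ?_, ?_, ?_⟩
    · -- lower bound
      have h1 : ∫ t in (0:ℝ)..1, (1-t)^γ * K⁻¹
          ≤ ∫ t in (0:ℝ)..1, (1-t)^γ * f (x + t*(y₀-x)) := by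
        refine intervalIntegral.integral_mono_on zero_le_one
          ((aux_base_int γ hγ).mul_const K⁻¹) hint_f ?_
        intro t ht
        have hz := (seg_mem hx hy₀' ht).2
        exact mul_le_mul_of_nonneg_left (hfb _ hz).1
          (Real.rpow_nonneg (by linarith [ht.2]) γ)
      rw [hval] at h1
      refine le_trans ?_ h1
      rw [← mul_inv]
      refine inv_anti₀ (by positivity) ?_
      calc (γ+1) * K = K * (γ+1) := by ring
        _ ≤ K' := hK'1
    · -- upper bound
      have h1 : ∫ t in (0:ℝ)..1, (1-t)^γ * f (x + t*(y₀-x))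
          ≤ ∫ t in (0:ℝ)..1, (1-t)^γ * K := by
        refine intervalIntegral.integral_mono_on zero_le_one hint_f
          ((aux_base_int γ hγ).mul_const K) ?_
        intro t ht
        have hz := (seg_mem hx hy₀' ht).2
        exact mul_le_mul_of_nonneg_left (hfb _ hz).2.1
          (Real.rpow_nonneg (by linarith [ht.2]) γ)
      rw [hval] at h1
      refine le_trans h1 ?_
      calc (γ+1)⁻¹ * K = K * (γ+1)⁻¹ := by ring
        _ ≤ K' := hK'3
    · -- first derivative bound
      have h1 := intervalIntegral.norm_integral_le_of_norm_le (μ := volume)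
        (f := fun t => (1-t)^(γ+1) * f' (x + t*(y₀-x)))
        (g := fun t => (1-t)^γ * K) zero_le_one ?_ ((aux_base_int γ hγ).mul_const K)
      · rw [Real.norm_eq_abs, hval] at h1
        refine le_trans h1 ?_
        calc (γ+1)⁻¹ * K = K * (γ+1)⁻¹ := by ring
          _ ≤ K' := hK'3
      · filter_upwards [aux_ae_vol] with t ht' htm
        have ht := ht' (by rwa [uIoc_of_le (zero_le_one : (0:ℝ) ≤ 1)])
        have hz := (seg_mem hx hy₀' (Ioo_subset_Icc_self ht)).2
        exact aux_est γ (γ+1) (by linarith) _ K ht (hfb _ hz).2.2.1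
    · -- second derivative bound
      set m₀ : ℝ := min x y₀ with hm₀
      have hm₀pos : 0 < m₀ := lt_min hx.1 hy₀
      have hm₀ρpos : 0 < m₀ ^ ρ := Real.rpow_pos_of_pos hm₀pos ρ
      have h1 := intervalIntegral.norm_integral_le_of_norm_le (μ := volume)
        (f := fun t => (1-t)^(γ+1+1) * f'' (x + t*(y₀-x)))
        (g := fun t => (1-t)^γ * (K * m₀ ^ ρ)) zero_le_one ?_ ((aux_base_int γ hγ).mul_const (K * m₀ ^ ρ))
      · rw [Real.norm_eq_abs, hval] at h1
        refine le_trans h1 ?_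
        have hm₀le : m₀ ^ ρ ≤ C * x ^ ρ := by
          rcases le_total x y₀ with hcase | hcase
          · rw [hm₀, min_eq_left hcase]
            exact le_mul_of_one_le_left hxρpos.le hC1
          · rw [hm₀, min_eq_right hcase]
            have hyx : y₁ ^ ρ ≤ x ^ ρ := Real.rpow_le_rpow_of_nonpos hx.1 hx.2.le hρ
            have hy₁ρpos : 0 < y₁ ^ ρ := Real.rpow_pos_of_pos hy₁pos ρ
            have hy₀ρpos : 0 < y₀ ^ ρ := Real.rpow_pos_of_pos hy₀ ρ
            have e : y₀ ^ ρ * (y₁ ^ ρ)⁻¹ * y₁ ^ ρ = y₀ ^ ρ := by field_simp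
            calc y₀ ^ ρ = y₀ ^ ρ * (y₁ ^ ρ)⁻¹ * y₁ ^ ρ := e.symm
              _ ≤ y₀ ^ ρ * (y₁ ^ ρ)⁻¹ * x ^ ρ :=
                  mul_le_mul_of_nonneg_left hyx (by positivity)
              _ ≤ C * x ^ ρ :=
                  mul_le_mul_of_nonneg_right (le_max_right _ _) hxρpos.le
        calc (γ+1)⁻¹ * (K * m₀ ^ ρ) ≤ (γ+1)⁻¹ * (K * (C * x ^ ρ)) := by
              refine mul_le_mul_of_nonneg_left ?_ (by positivity)
              exact mul_le_mul_of_nonneg_left hm₀le hK.le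
          _ = (K * (γ+1)⁻¹ * C) * x ^ ρ := by ring
          _ ≤ K' * x ^ ρ := mul_le_mul_of_nonneg_right hK'2 hxρpos.le
      · filter_upwards [aux_ae_vol] with t ht' htm
        have ht := ht' (by rwa [uIoc_of_le (zero_le_one : (0:ℝ) ≤ 1)])
        have hzz := seg_mem hx hy₀' (Ioo_subset_Icc_self ht)
        refine aux_est γ (γ+1+1) (by linarith) _ (K * m₀ ^ ρ) ht ?_
        refine le_trans (hfb _ hzz.2).2.2.2 ?_
        exact mul_le_mul_of_nonneg_left
          (Real.rpow_le_rpow_of_nonpos hm₀pos hzz.1 hρ) hK.le
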